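/- Run the SO Extragradient method with variance reduction: starting from z_0^0 = ω_0^0, with parameters γ > 0, α = 1 − p, p = 1/n, n ≥ 2; draw a single uniformly random permutation π of {1,…,n} before the first epoch and reuse it every epoch; at inner step t = 0,…,n−1 of epoch s set z̄_s^t = α z_s^t + (1−α) ω_s^t; z_s^{t+1/2} = prox_{γg}(z̄_s^t − γ F(ω_s^t)); F̂(z_s^{t+1/2}) = F_{π(t)}(z_s^{t+1/2}) − F_{π(t)}(ω_s^t) + F(ω_s^t); z_s^{t+1} = prox_{γg}(z̄_s^t − γ F̂(z_s^{t+1/2})); and ω_s^{t+1} = z_s^t with probability p, ω_s^{t+1} = ω_s^t with probability 1 − p (independently of everything else). If each F_i is L-Lipschitz and μ-strongly monotone and γ ≤ (1−α)μ/(6L²), then after T = Sn total iterations V_S^n ≤ (1 − γμ/4)^T V_0^0, where V_s^t = E‖z_s^t − z*‖² + E‖ω_s^t − z*‖². -/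

import Mathlib

open scoped RealInnerProductSpace


section SOVRAux
variable {E : Type*} [NormedAddCommGroup E] [InnerProductSpace ℝ E]

private lemma sovr_amgm (c X Y : ℝ) (hc : 0 < c) : 2*(X*Y) ≤ c*Y^2 + X^2/c := by
  have h := sq_nonneg (c*Y - X)
  have h2 : 0 ≤ (c*Y - X)^2 / c := div_nonneg h hc.le
  have h3 : (c*Y - X)^2 / c = c*Y^2 + X^2/c - 2*(X*Y) := by field_simp; ring
  linarith [h3 ▸ h2]

private lemma sovr_sq_split (θ x y : ℝ) (hθ : 0 < θ) :
    (x+y)^2 ≤ (1+θ)*x^2 + (1+1/θ)*y^2 := by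
  have h := sq_nonneg (θ*x - y)
  have h2 : 0 ≤ (θ*x - y)^2 / θ := div_nonneg h hθ.le
  have h3 : (θ*x - y)^2 / θ = (1+θ)*x^2 + (1+1/θ)*y^2 - (x+y)^2 := by field_simp; ring
  linarith [h3 ▸ h2]

private lemma sovr_three_point (x w y : E) :
    2*(⟪x - w, y - x⟫ : ℝ) = ‖y-w‖^2 - ‖x-w‖^2 - ‖y-x‖^2 := by
  have h : y - x = (y - w) - (x - w) := by abel
  have h2 : ‖(y-w) - (x-w)‖^2 = ‖y-w‖^2 - 2*(⟪y-w, x-w⟫:ℝ) + ‖x-w‖^2 :=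
    norm_sub_sq_real _ _
  have h3 : (⟪x-w, y-x⟫:ℝ) = ⟪x-w, y-w⟫ - ⟪x-w, x-w⟫ := by rw [h, inner_sub_right]
  have h4 : (⟪x-w, x-w⟫:ℝ) = ‖x-w‖^2 := real_inner_self_eq_norm_sq _
  have h5 : (⟪y-w, x-w⟫:ℝ) = ⟪x-w, y-w⟫ := real_inner_comm _ _
  rw [show ‖y-x‖^2 = ‖(y-w)-(x-w)‖^2 by rw [← h]]
  linarith

private lemma sovr_mix_norm (a b zs : E) (α pp : ℝ) (h : α + pp = 1) :
    ‖(α•a + pp•b) - zs‖^2 = α*‖a-zs‖^2 + pp*‖b-zs‖^2 - α*pp*‖a-b‖^2 := by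
  have h1 : (α + pp) • zs = zs := by rw [h, one_smul]
  have key : (α•a + pp•b) - zs = α•(a-zs) + pp•(b-zs) := by
    calc α•a + pp•b - zs = α•a + pp•b - (α+pp)•zs := by rw [h1]
    _ = α•(a-zs) + pp•(b-zs) := by rw [add_smul, smul_sub, smul_sub]; abel
  have hab : a - b = (a - zs) - (b - zs) := by abel
  have hn : ‖α•(a-zs) + pp•(b-zs)‖^2
      = α^2*‖a-zs‖^2 + 2*(α*pp)*(⟪a-zs, b-zs⟫:ℝ) + pp^2*‖b-zs‖^2 := by
    rw [norm_add_sq_real, norm_smul, norm_smul, real_inner_smul_left, real_inner_smul_right,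
      mul_pow, mul_pow]
    simp only [Real.norm_eq_abs, sq_abs]
    ring
  have hd : ‖(a-zs) - (b-zs)‖^2 = ‖a-zs‖^2 - 2*(⟪a-zs, b-zs⟫:ℝ) + ‖b-zs‖^2 :=
    norm_sub_sq_real _ _
  rw [key, hab]
  linear_combination hn + α*pp*hd + (α*‖a-zs‖^2 + pp*‖b-zs‖^2)*h

set_option maxHeartbeats 1000000 in
private lemma sovr_assemble (pp gm KK P M T Z U W D A B : ℝ)
    (hppl : 0 < pp) (hppu : pp ≤ 1/2) (hgm0 : 0 < gm) (hgm6 : gm ≤ pp/6)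
    (hKnn : 0 ≤ KK) (hKb : KK ≤ pp^2/36 + (40/78)*pp)
    (hT : 0 ≤ T) (hDn : 0 ≤ D)
    (step1 : P ≤ M - T - (7/10)*gm*U + KK*W)
    (hM5 : M ≤ (13/10)*U + (13/3)*T)
    (hW6 : W ≤ (1+2*pp)*((1-pp)^2*D) + (1+1/(2*pp))*T)
    (hMeq : M = (1-pp)*A + pp*B - (1-pp)*pp*D) :
    P ≤ (1 - (7/13)*gm)*((1-pp)*A + pp*B) := by
  have hpsq : pp^2 ≤ pp/2 := by nlinarith [mul_le_mul_of_nonneg_left hppu hppl.le]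
  have F1 : KK*(1+1/(2*pp)) + (7/3)*gm ≤ 1 := by
    have h1 : KK*(1/(2*pp)) ≤ (pp^2/36 + (40/78)*pp)*(1/(2*pp)) :=
      mul_le_mul_of_nonneg_right hKb (by positivity)
    have h2 : (pp^2/36 + (40/78)*pp)*(1/(2*pp)) = pp/72 + 20/78 := by
      field_simp; ring
    rw [h2] at h1
    have hexp : KK*(1+1/(2*pp)) = KK + KK*(1/(2*pp)) := by ring
    rw [hexp]
    linarith [h1, hKb, hgm6, hpsq, hppu]
  have F2 : KK*((1+2*pp)*(1-pp)^2) ≤ (1-(7/13)*gm)*((1-pp)*pp) := by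
    have hpoly : (0:ℝ) ≤ (1+2*pp)*(1-pp)^2 := by positivity
    have hF2a : KK*((1+2*pp)*(1-pp)^2) ≤ (pp^2/36 + (40/78)*pp)*((1+2*pp)*(1-pp)^2) :=
      mul_le_mul_of_nonneg_right hKb hpoly
    have hq : (7/13)*gm ≤ (7/78)*pp := by linarith
    have hpnn : (0:ℝ) ≤ (1-pp)*pp := mul_nonneg (by linarith) hppl.le
    have hF2b : (1-(7/78)*pp)*((1-pp)*pp) ≤ (1-(7/13)*gm)*((1-pp)*pp) :=
      mul_le_mul_of_nonneg_right (by linarith) hpnn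
    have hcube : pp^3 ≤ pp/4 := by
      have h1 : pp*pp^2 ≤ pp*(pp/2) := mul_le_mul_of_nonneg_left hpsq hppl.le
      have h2 : pp*pp^2 = pp^3 := by ring
      nlinarith [h1, hpsq]
    have hquad : pp^4 ≤ pp/8 := by
      have h1 : pp*pp^3 ≤ pp*(pp/4) := mul_le_mul_of_nonneg_left hcube hppl.le
      have h2 : pp*pp^3 = pp^4 := by ring
      nlinarith [h1, hpsq]
    have hsq2 : pp - 1/4 ≤ pp^2 := by nlinarith [sq_nonneg (pp - 1/2)]
    have hQ : (0:ℝ) ≤ 19/39 - (523/468)*pp + (127/78)*pp^2 - (49/52)*pp^3 - (1/18)*pp^4 := by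
      linarith [hcube, hquad, hsq2]
    have hident : (1-(7/78)*pp)*((1-pp)*pp) - (pp^2/36 + (40/78)*pp)*((1+2*pp)*(1-pp)^2)
        = pp*(19/39 - (523/468)*pp + (127/78)*pp^2 - (49/52)*pp^3 - (1/18)*pp^4) := by
      ring
    have hPQ : (0:ℝ) ≤ pp*(19/39 - (523/468)*pp + (127/78)*pp^2 - (49/52)*pp^3 - (1/18)*pp^4) :=
      mul_nonneg hppl.le hQ
    linarith [hF2a, hF2b, hPQ, hident]
  have h5' : (7/13)*gm*M ≤ (7/10)*gm*U + (7/3)*gm*T := by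
    have := mul_le_mul_of_nonneg_left hM5 (by positivity : (0:ℝ) ≤ (7/13)*gm)
    nlinarith [this]
  have h6' : KK*W ≤ KK*((1+2*pp)*((1-pp)^2*D)) + KK*((1+1/(2*pp))*T) := by
    have := mul_le_mul_of_nonneg_left hW6 hKnn
    linarith [this]
  have Fbt : (KK*(1+1/(2*pp)) + (7/3)*gm)*T ≤ 1*T :=
    mul_le_mul_of_nonneg_right F1 hT
  have FD : (KK*((1+2*pp)*(1-pp)^2))*D ≤ ((1-(7/13)*gm)*((1-pp)*pp))*D :=
    mul_le_mul_of_nonneg_right F2 hDn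
  have hMeq' : (1-(7/13)*gm)*M
      = (1-(7/13)*gm)*((1-pp)*A + pp*B) - ((1-(7/13)*gm)*((1-pp)*pp))*D := by
    rw [hMeq]; ring
  linarith [step1, h5', h6', Fbt, FD, hMeq']

set_option maxHeartbeats 1000000 in
private lemma sovr_step_core (L μ γ pp : ℝ) (hL : 0 < L) (hμ : 0 < μ) (hγ0 : 0 < γ)
    (hp0 : 0 < pp) (hp2 : pp ≤ 1/2) (hμL : μ ≤ L) (hcap : 6*(γ*L^2) ≤ pp*μ)
    (a b zs zb u zp Fb Fh Fzs Fu : E) (Gu Gzp Gzs : ℝ)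
    (hM : ‖zs - zb‖^2 = (1-pp)*‖a-zs‖^2 + pp*‖b-zs‖^2 - (1-pp)*pp*‖a-b‖^2)
    (hzbb : ‖zb - b‖ ≤ (1-pp)*‖a-b‖)
    (hub : ‖Fh - Fu‖ ≤ 2*L*‖u - b‖)
    (hfb : ‖Fb - Fh‖ ≤ L*‖u - b‖)
    (hmono : μ*‖u - zs‖^2 ≤ ⟪Fu - Fzs, u - zs⟫)
    (P1 : γ*Gu ≤ γ*Gzp + ⟪u - (zb - γ•Fb), zp - u⟫)
    (P2 : γ*Gzp ≤ γ*Gzs + ⟪zp - (zb - γ•Fh), zs - zp⟫)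
    (VI : γ*Gzs ≤ γ*Gu + γ*⟪Fzs, u - zs⟫) :
    ‖zp - zs‖^2 ≤ (1 - (7/13)*(γ*μ)) * ((1-pp)*‖a - zs‖^2 + pp*‖b - zs‖^2) := by
  have hgm : (0:ℝ) < γ*μ := mul_pos hγ0 hμ
  have i1 : (⟪u - (zb - γ•Fb), zp - u⟫:ℝ) = ⟪u - zb, zp - u⟫ + γ*⟪Fb, zp-u⟫ := by
    rw [show u - (zb - γ•Fb) = (u - zb) + γ•Fb by abel, inner_add_left, real_inner_smul_left]
  have i2 : (⟪zp - (zb - γ•Fh), zs - zp⟫:ℝ) = ⟪zp - zb, zs - zp⟫ + γ*⟪Fh, zs-zp⟫ := by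
    rw [show zp - (zb - γ•Fh) = (zp - zb) + γ•Fh by abel, inner_add_left, real_inner_smul_left]
  have t1 := sovr_three_point u zb zp
  have t2 := sovr_three_point zp zb zs
  have r1 : γ*(⟪Fb, zp-u⟫:ℝ) = γ*⟪Fb - Fh, zp-u⟫ + γ*⟪Fh, zp-u⟫ := by
    rw [inner_sub_left]; ring
  have r2 : γ*(⟪Fh, zp-u⟫:ℝ) + γ*(⟪Fh, zs-zp⟫:ℝ) = γ*⟪Fh, zs-u⟫ := by
    rw [show (⟪Fh, zs-u⟫:ℝ) = ⟪Fh, (zp-u) + (zs-zp)⟫ by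
      rw [show (zp-u)+(zs-zp) = zs-u by abel], inner_add_right]
    ring
  have r3 : γ*(⟪Fh, zs-u⟫:ℝ)
      = -(γ*⟪Fh - Fu, u-zs⟫) - γ*⟪Fu - Fzs, u - zs⟫ - γ*⟪Fzs, u-zs⟫ := by
    rw [show zs - u = -(u - zs) by abel, inner_neg_right, inner_sub_left, inner_sub_left]; ring
  have hsum : (0:ℝ) ≤ (⟪u - zb, zp-u⟫:ℝ) + γ*⟪Fb, zp-u⟫
      + ((⟪zp-zb, zs-zp⟫:ℝ) + γ*⟪Fh, zs-zp⟫) + γ*⟪Fzs, u-zs⟫ := by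
    rw [i1] at P1; rw [i2] at P2; linarith
  have hPsym : ‖zs - zp‖^2 = ‖zp - zs‖^2 := by rw [norm_sub_rev]
  have base : ‖zp - zs‖^2 ≤ ‖zs - zb‖^2 - ‖u - zb‖^2 - ‖zp - u‖^2
      + 2*(γ*⟪Fb - Fh, zp - u⟫) - 2*(γ*⟪Fh - Fu, u - zs⟫) - 2*(γ*⟪Fu - Fzs, u - zs⟫) := by
    linarith [hsum, t1, t2, r1, r2, r3]
  have b1 : (⟪Fb - Fh, zp-u⟫:ℝ) ≤ (L*‖u-b‖)*‖zp-u‖ :=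
    (real_inner_le_norm _ _).trans (mul_le_mul_of_nonneg_right hfb (norm_nonneg _))
  have b1' : 2*(γ*(⟪Fb-Fh, zp-u⟫:ℝ)) ≤ (γ*L)^2*‖u-b‖^2 + ‖zp-u‖^2 := by
    have h := sovr_amgm 1 ((γ*L)*‖u-b‖) (‖zp-u‖) one_pos
    have h2 : 2*(γ*(⟪Fb-Fh,zp-u⟫:ℝ)) ≤ 2*(γ*((L*‖u-b‖)*‖zp-u‖)) := by
      have := mul_le_mul_of_nonneg_left b1 hγ0.le; linarith
    have h3 : ((γ*L)*‖u-b‖)^2/1 = (γ*L)^2*‖u-b‖^2 := by ring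
    rw [h3] at h; linarith [h, h2]
  have b2 : -(⟪Fh - Fu, u-zs⟫:ℝ) ≤ (2*L*‖u-b‖)*‖u-zs‖ := by
    have ha : -(⟪Fh - Fu, u-zs⟫:ℝ) ≤ ‖Fh - Fu‖*‖u-zs‖ := by
      have h1 := abs_real_inner_le_norm (Fh - Fu) (u - zs)
      have h2 := neg_abs_le (⟪Fh - Fu, u-zs⟫:ℝ)
      linarith
    exact ha.trans (mul_le_mul_of_nonneg_right hub (norm_nonneg _))
  have b2' : -(2*(γ*(⟪Fh-Fu, u-zs⟫:ℝ)))
      ≤ (13/10)*(γ*μ)*‖u-zs‖^2 + (40/13)*(γ*(L^2/μ))*‖u-b‖^2 := by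
    have hc : (0:ℝ) < (13/10)*(γ*μ) := by positivity
    have h := sovr_amgm ((13/10)*(γ*μ)) (2*γ*L*‖u-b‖) (‖u-zs‖) hc
    have hdiv : (2*γ*L*‖u-b‖)^2/((13/10)*(γ*μ)) = (40/13)*(γ*(L^2/μ))*‖u-b‖^2 := by
      field_simp; ring
    rw [hdiv] at h
    have h2 : -(2*(γ*(⟪Fh-Fu,u-zs⟫:ℝ))) ≤ 2*(γ*((2*L*‖u-b‖)*‖u-zs‖)) := by
      have := mul_le_mul_of_nonneg_left b2 hγ0.le; linarith
    linarith [h, h2]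
  have mono' : 2*(γ*(μ*‖u-zs‖^2)) ≤ 2*(γ*(⟪Fu - Fzs, u-zs⟫:ℝ)) := by
    have := mul_le_mul_of_nonneg_left hmono hγ0.le; linarith
  have step1 : ‖zp - zs‖^2 ≤ ‖zs - zb‖^2 - ‖u-zb‖^2 - (7/10)*(γ*μ)*‖u-zs‖^2
      + ((γ*L)^2 + (40/13)*(γ*(L^2/μ)))*‖u-b‖^2 := by
    linarith [base, b1', b2', mono']
  have hM5 : ‖zs-zb‖^2 ≤ (13/10)*‖u-zs‖^2 + (13/3)*‖u-zb‖^2 := by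
    have hMub : ‖zs - zb‖ ≤ ‖u - zs‖ + ‖u - zb‖ := by
      calc ‖zs - zb‖ = ‖(zs - u) + (u - zb)‖ := by rw [show (zs-u)+(u-zb) = zs - zb by abel]
      _ ≤ ‖zs-u‖ + ‖u-zb‖ := norm_add_le _ _
      _ = ‖u-zs‖ + ‖u-zb‖ := by rw [norm_sub_rev]
    have hs := sovr_sq_split (3/10) (‖u-zs‖) (‖u-zb‖) (by norm_num)
    have hsq : ‖zs-zb‖^2 ≤ (‖u-zs‖ + ‖u-zb‖)^2 :=
      pow_le_pow_left₀ (norm_nonneg _) hMub 2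
    norm_num at hs; linarith
  have hW6 : ‖u-b‖^2 ≤ (1+2*pp)*((1-pp)^2*‖a-b‖^2) + (1+1/(2*pp))*‖u-zb‖^2 := by
    have hWb2 : ‖u - b‖ ≤ (1-pp)*‖a-b‖ + ‖u-zb‖ := by
      have h1 : ‖u-b‖ ≤ ‖u - zb‖ + ‖zb - b‖ := by
        calc ‖u-b‖ = ‖(u - zb) + (zb - b)‖ := by rw [show (u-zb)+(zb-b) = u-b by abel]
        _ ≤ ‖u-zb‖ + ‖zb-b‖ := norm_add_le _ _
      linarith [hzbb]
    have hs := sovr_sq_split (2*pp) ((1-pp)*‖a-b‖) (‖u-zb‖) (by positivity)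
    have hsq : ‖u-b‖^2 ≤ ((1-pp)*‖a-b‖ + ‖u-zb‖)^2 :=
      pow_le_pow_left₀ (norm_nonneg _) hWb2 2
    have hmp : ((1-pp)*‖a-b‖)^2 = (1-pp)^2*‖a-b‖^2 := by ring
    rw [hmp] at hs
    linarith
  have hκ : γ*(L^2/μ) ≤ pp/6 := by
    rw [show γ*(L^2/μ) = (γ*L^2)/μ by ring, div_le_div_iff₀ hμ (by norm_num : (0:ℝ) < 6)]
    linarith
  have hgL : γ*L ≤ pp/6 := by
    have h2 : γ*L ≤ γ*(L^2/μ) := by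
      rw [show γ*(L^2/μ) = (γ*L^2)/μ by ring, le_div_iff₀ hμ]
      have h3 : (γ*L)*μ ≤ (γ*L)*L :=
        mul_le_mul_of_nonneg_left hμL (mul_nonneg hγ0.le hL.le)
      linarith
    linarith
  have hgm6 : γ*μ ≤ pp/6 := by
    have := mul_le_mul_of_nonneg_left hμL hγ0.le
    linarith [hgL]
  have hKnn : (0:ℝ) ≤ (γ*L)^2 + (40/13)*(γ*(L^2/μ)) := by positivity
  have hKb : (γ*L)^2 + (40/13)*(γ*(L^2/μ)) ≤ pp^2/36 + (40/78)*pp := by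
    have h1 : (γ*L)^2 ≤ (pp/6)^2 := pow_le_pow_left₀ (mul_nonneg hγ0.le hL.le) hgL 2
    have h2 : (pp/6)^2 = pp^2/36 := by ring
    linarith [hκ]
  exact sovr_assemble pp (γ*μ) ((γ*L)^2 + (40/13)*(γ*(L^2/μ))) (‖zp-zs‖^2) (‖zs-zb‖^2)
    (‖u-zb‖^2) (‖zp-u‖^2) (‖u-zs‖^2) (‖u-b‖^2) (‖a-b‖^2) (‖a-zs‖^2) (‖b-zs‖^2)
    hp0 hp2 hgm hgm6 hKnn hKb (sq_nonneg _) (sq_nonneg _) step1 hM5 hW6 hM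

end SOVRAux

set_option maxHeartbeats 4000000 in
/-- Linear convergence of the SO Extragradient method with variance reduction for a
finite-sum variational inequality with `L`-Lipschitz, `μ`-strongly monotone operators:
with `p = 1/n`, `α = 1 − p`, `γ ≤ (1−α)μ/(6L²)`, starting from `z_0^0 = ω_0^0`, a single
uniform permutation `π` is drawn before the first epoch and reused in every epoch,
performing
`z̄_s^t = αz_s^t + (1−α)ω_s^t`, `z_s^{t+1/2} = prox_{γg}(z̄_s^t − γF(ω_s^t))`,
`F̂ = F_{π(t)}(z_s^{t+1/2}) − F_{π(t)}(ω_s^t) + F(ω_s^t)`,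
`z_s^{t+1} = prox_{γg}(z̄_s^t − γF̂)`, and `ω_s^{t+1} = z_s^t` with probability `p`
(else `ω_s^{t+1} = ω_s^t`), independently of everything else.  Then after `T = Sn` total
iterations `V_S^n ≤ (1 − γμ/4)^T V_0^0` where `V_s^t = E‖z_s^t − z*‖² + E‖ω_s^t − z*‖²`.
(The Bernoulli coin of probability `p = 1/n` is realized as a uniform variable on `Fin n`
hitting value `0`; the expectation is the uniform average over all the randomness.) -/
theorem so_vr_extragradient_linear_convergence
    (d n S : ℕ) (hn : 2 ≤ n) (hS : 0 < S)
    (L μ γ p α : ℝ) (hL : 0 < L) (hμ : 0 < μ)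
    (hp : p = (n : ℝ)⁻¹) (hα : α = 1 - p)
    (hγ0 : 0 < γ) (hγ : γ ≤ (1 - α) * μ / (6 * L ^ 2))
    (F : Fin n → EuclideanSpace ℝ (Fin d) → EuclideanSpace ℝ (Fin d))
    (g : EuclideanSpace ℝ (Fin d) → EReal)
    (hg_bot : ∀ x, g x ≠ ⊥) (hg_top : ∃ x, g x ≠ ⊤)
    (hg_convex : ∀ (x y : EuclideanSpace ℝ (Fin d)) (a b : ℝ), 0 ≤ a → 0 ≤ b → a + b = 1 →
      g (a • x + b • y) ≤ (a : EReal) * g x + (b : EReal) * g y)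
    (hg_lsc : LowerSemicontinuous g)
    (prox : EuclideanSpace ℝ (Fin d) → EuclideanSpace ℝ (Fin d))
    (hprox : ∀ x y : EuclideanSpace ℝ (Fin d),
      (γ : EReal) * g (prox x) + ((‖prox x - x‖ ^ 2 / 2 : ℝ) : EReal)
        ≤ (γ : EReal) * g y + ((‖y - x‖ ^ 2 / 2 : ℝ) : EReal))
    (hLip : ∀ (i : Fin n) (z₁ z₂ : EuclideanSpace ℝ (Fin d)),
      ‖F i z₁ - F i z₂‖ ≤ L * ‖z₁ - z₂‖)
    (hmono : ∀ (i : Fin n) (z₁ z₂ : EuclideanSpace ℝ (Fin d)),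
      μ * ‖z₁ - z₂‖ ^ 2 ≤ ⟪F i z₁ - F i z₂, z₁ - z₂⟫)
    (zstar : EuclideanSpace ℝ (Fin d))
    (hVI : ∀ z, g zstar ≤ ((⟪(n : ℝ)⁻¹ • ∑ i, F i zstar, z - zstar⟫ : ℝ) : EReal) + g z)
    (start : EuclideanSpace ℝ (Fin d))
    (z zhalf w : Equiv.Perm (Fin n) × (Fin S → Fin n → Fin n) →
      ℕ → ℕ → EuclideanSpace ℝ (Fin d))
    (hinit : ∀ ω, z ω 0 0 = start ∧ w ω 0 0 = start)
    (hhalf : ∀ ω, ∀ s, ∀ hs : s < S, ∀ t, ∀ ht : t < n,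
      zhalf ω s t = prox ((α • z ω s t + (1 - α) • w ω s t)
        - γ • ((n : ℝ)⁻¹ • ∑ i, F i (w ω s t))))
    (hstep : ∀ ω, ∀ s, ∀ hs : s < S, ∀ t, ∀ ht : t < n,
      z ω s (t + 1) = prox ((α • z ω s t + (1 - α) • w ω s t)
        - γ • (F (ω.1 ⟨t, ht⟩) (zhalf ω s t) - F (ω.1 ⟨t, ht⟩) (w ω s t)
            + (n : ℝ)⁻¹ • ∑ i, F i (w ω s t))))
    (hwstep : ∀ ω, ∀ s, ∀ hs : s < S, ∀ t, ∀ ht : t < n,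
      w ω s (t + 1) = if (ω.2 ⟨s, hs⟩ ⟨t, ht⟩ : Fin n).1 = 0 then z ω s t else w ω s t)
    (hepoch : ∀ ω, ∀ s, s + 1 ≤ S →
      z ω (s + 1) 0 = z ω s n ∧ w ω (s + 1) 0 = w ω s n) :
    (∑ ω : Equiv.Perm (Fin n) × (Fin S → Fin n → Fin n),
        (‖z ω (S - 1) n - zstar‖ ^ 2 + ‖w ω (S - 1) n - zstar‖ ^ 2)) /
        (Fintype.card (Equiv.Perm (Fin n) × (Fin S → Fin n → Fin n)) : ℝ)
      ≤ (1 - γ * μ / 4) ^ (S * n) *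
        ((∑ ω : Equiv.Perm (Fin n) × (Fin S → Fin n → Fin n),
            (‖z ω 0 0 - zstar‖ ^ 2 + ‖w ω 0 0 - zstar‖ ^ 2)) /
          (Fintype.card (Equiv.Perm (Fin n) × (Fin S → Fin n → Fin n)) : ℝ)) := by
  classical
  rcases Nat.eq_zero_or_pos d with hd | hd
  · -- degenerate case d = 0 : everything is zero
    subst hd
    have hzero : ∀ x y : EuclideanSpace ℝ (Fin 0), ‖x - y‖^2 = (0:ℝ) := by
      intro x y
      have hxy : x - y = 0 := by ext i; exact i.elim0
      rw [hxy, norm_zero]; norm_num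
    simp only [hzero]
    simp
  -- main case d ≥ 1
  have hn2 : (2:ℝ) ≤ n := by exact_mod_cast hn
  have hn0 : (0:ℝ) < n := by linarith
  have hp0 : 0 < p := by rw [hp]; positivity
  have hp2 : p ≤ 1/2 := by
    rw [hp]
    rw [inv_le_comm₀ (by positivity) (by norm_num)]
    · linarith
  have hμL : μ ≤ L := by
    have i0 : Fin n := ⟨0, by omega⟩
    have hne : ‖EuclideanSpace.single (⟨0, hd⟩ : Fin d) (1:ℝ)‖ = 1 := by
      rw [EuclideanSpace.norm_single]; norm_num
    have h1 := hmono i0 (EuclideanSpace.single (⟨0, hd⟩ : Fin d) (1:ℝ)) 0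
    have h2 := hLip i0 (EuclideanSpace.single (⟨0, hd⟩ : Fin d) (1:ℝ)) 0
    have h3 := real_inner_le_norm
      (F i0 (EuclideanSpace.single (⟨0, hd⟩ : Fin d) (1:ℝ)) - F i0 0)
      (EuclideanSpace.single (⟨0, hd⟩ : Fin d) (1:ℝ) - 0)
    rw [sub_zero] at h1 h2 h3
    rw [hne] at h1 h2 h3
    nlinarith [h1, h2, h3]
  have hcap : 6*(γ*L^2) ≤ p*μ := by
    have h1 : (1:ℝ) - α = p := by rw [hα]; ring
    rw [h1] at hγ
    have h2 : (0:ℝ) < 6*L^2 := by positivity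
    rw [le_div_iff₀ h2] at hγ
    nlinarith [hγ]
  have hgm0 : (0:ℝ) < γ*μ := mul_pos hγ0 hμ
  have hκ' : γ*μ ≤ p/6 := by
    have hμ2 : μ*μ ≤ L*L := mul_le_mul hμL hμL hμ.le hL.le
    have h1 : 6*γ*(μ*μ) ≤ 6*γ*(L*L) :=
      mul_le_mul_of_nonneg_left hμ2 (by positivity)
    have h2 : (6*γ*μ)*μ ≤ p*μ := by nlinarith [hcap]
    have h3 : 6*γ*μ ≤ p := le_of_mul_le_mul_right h2 hμ
    linarith
  -- averaged operator facts
  have hkey : ∀ x y : EuclideanSpace ℝ (Fin d),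
      (n:ℝ)⁻¹ • ∑ i, F i x - (n:ℝ)⁻¹ • ∑ i, F i y = (n:ℝ)⁻¹ • ∑ i, (F i x - F i y) := by
    intro x y
    rw [← smul_sub, Finset.sum_sub_distrib]
  have hFbLip : ∀ x y : EuclideanSpace ℝ (Fin d),
      ‖(n:ℝ)⁻¹ • ∑ i, F i x - (n:ℝ)⁻¹ • ∑ i, F i y‖ ≤ L*‖x-y‖ := by
    intro x y
    rw [hkey, norm_smul, Real.norm_eq_abs, abs_of_nonneg (by positivity : (0:ℝ) ≤ (n:ℝ)⁻¹)]
    have h1 : ‖∑ i, (F i x - F i y)‖ ≤ ∑ _i : Fin n, L*‖x-y‖ :=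
      (norm_sum_le _ _).trans (Finset.sum_le_sum (fun i _ => hLip i x y))
    rw [Finset.sum_const, Finset.card_univ, Fintype.card_fin, nsmul_eq_mul] at h1
    calc (n:ℝ)⁻¹ * ‖∑ i, (F i x - F i y)‖ ≤ (n:ℝ)⁻¹ * ((n:ℝ)*(L*‖x-y‖)) := by
          apply mul_le_mul_of_nonneg_left h1 (by positivity)
    _ = L*‖x-y‖ := by field_simp
  have hFbMono : ∀ x y : EuclideanSpace ℝ (Fin d),
      μ*‖x-y‖^2 ≤ ⟪(n:ℝ)⁻¹ • ∑ i, F i x - (n:ℝ)⁻¹ • ∑ i, F i y, x - y⟫ := by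
    intro x y
    rw [hkey, real_inner_smul_left, sum_inner]
    have h1 : ∑ _i : Fin n, μ*‖x-y‖^2 ≤ ∑ i, (⟪F i x - F i y, x - y⟫:ℝ) :=
      Finset.sum_le_sum (fun i _ => hmono i x y)
    rw [Finset.sum_const, Finset.card_univ, Fintype.card_fin, nsmul_eq_mul] at h1
    calc μ*‖x-y‖^2 = (n:ℝ)⁻¹ * ((n:ℝ)*(μ*‖x-y‖^2)) := by field_simp
    _ ≤ (n:ℝ)⁻¹ * ∑ i, (⟪F i x - F i y, x - y⟫:ℝ) := by
          apply mul_le_mul_of_nonneg_left h1 (by positivity)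
  -- finiteness of g at prox points and at zstar
  obtain ⟨y0, hy0⟩ := hg_top
  have hproxTop : ∀ x, g (prox x) ≠ ⊤ := by
    intro x hx
    have h := hprox x y0
    rw [hx, EReal.coe_mul_top_of_pos (by exact_mod_cast hγ0), EReal.top_add_coe] at h
    rw [(EReal.coe_toReal hy0 (hg_bot y0)).symm, ← EReal.coe_mul, ← EReal.coe_add] at h
    exact (EReal.coe_ne_top _) (top_le_iff.1 h)
  have hzsTop : g zstar ≠ ⊤ := by
    intro hzs
    have h := hVI y0
    rw [hzs, (EReal.coe_toReal hy0 (hg_bot y0)).symm, ← EReal.coe_add] at h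
    exact (EReal.coe_ne_top _) (top_le_iff.1 h)
  -- prox variational inequality in real form
  have hproxVI : ∀ x y, g y ≠ ⊤ →
      γ*((g (prox x)).toReal) ≤ γ*((g y).toReal) + ⟪prox x - x, y - prox x⟫ := by
    intro x y hy
    have key : ∀ θ : ℝ, 0 < θ → θ ≤ 1 →
        γ*((g (prox x)).toReal) ≤ γ*((g y).toReal) + ⟪prox x - x, y - prox x⟫
          + θ*(‖y - prox x‖^2/2) := by
      intro θ hθ0 hθ1
      have hcv := hg_convex (prox x) y (1-θ) θ (by linarith) hθ0.le (by ring)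
      have hpx := hprox x ((1-θ) • prox x + θ • y)
      have hP : g (prox x) = (((g (prox x)).toReal : ℝ) : EReal) :=
        (EReal.coe_toReal (hproxTop x) (hg_bot _)).symm
      have hY : g y = (((g y).toReal : ℝ) : EReal) := (EReal.coe_toReal hy (hg_bot _)).symm
      have hcv' : g ((1-θ) • prox x + θ • y)
          ≤ (((1-θ)*((g (prox x)).toReal) + θ*((g y).toReal) : ℝ) : EReal) := by
        rw [hP, hY] at hcv
        rw [EReal.coe_add, EReal.coe_mul, EReal.coe_mul]
        exact hcv
      have hstep' : (γ:EReal) * g ((1-θ)•prox x + θ•y)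
          ≤ ((γ*((1-θ)*((g (prox x)).toReal) + θ*((g y).toReal)) : ℝ) : EReal) := by
        calc (γ:EReal) * g ((1-θ)•prox x + θ•y)
            ≤ (γ:EReal) * (((1-θ)*((g (prox x)).toReal) + θ*((g y).toReal) : ℝ) : EReal) :=
              mul_le_mul_of_nonneg_left hcv' (by exact_mod_cast hγ0.le)
        _ = _ := by rw [← EReal.coe_mul]
      have hchain := hpx.trans (add_le_add_left hstep' _)
      rw [hP, ← EReal.coe_mul, ← EReal.coe_add, ← EReal.coe_add] at hchain
      have hreal : γ*((g (prox x)).toReal) + ‖prox x - x‖^2/2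
          ≤ γ*((1-θ)*((g (prox x)).toReal) + θ*((g y).toReal))
            + ‖((1-θ)•prox x + θ•y) - x‖^2/2 := by
        exact_mod_cast hchain
      have hyθ : ((1-θ)•prox x + θ•y) - x = (prox x - x) + θ•(y - prox x) := by
        rw [sub_smul, one_smul, smul_sub]
        abel
      have hnorm : ‖(prox x - x) + θ•(y - prox x)‖^2
          = ‖prox x - x‖^2 + 2*θ*(⟪prox x - x, y - prox x⟫:ℝ) + θ^2*‖y - prox x‖^2 := by
        rw [norm_add_sq_real, real_inner_smul_right, norm_smul]
        simp only [Real.norm_eq_abs]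
        rw [mul_pow, sq_abs]
        ring
      rw [hyθ, hnorm] at hreal
      have h4 : θ*(γ*((g (prox x)).toReal))
          ≤ θ*(γ*((g y).toReal) + ⟪prox x - x, y - prox x⟫ + θ*(‖y - prox x‖^2/2)) := by
        nlinarith [hreal]
      have h5 := (mul_le_mul_iff_right₀ hθ0).1 h4
      linarith
    by_contra hcon
    push_neg at hcon
    have hCnn : (0:ℝ) ≤ ‖y - prox x‖^2/2 := by positivity
    have hA0 : 0 < γ*((g (prox x)).toReal) - γ*((g y).toReal) - ⟪prox x - x, y - prox x⟫ := by
      linarith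
    set Agap := γ*((g (prox x)).toReal) - γ*((g y).toReal) - ⟪prox x - x, y - prox x⟫ with hAdef
    set C := ‖y - prox x‖^2/2 with hCdef
    have hθpos : 0 < min 1 (Agap/(2*C+1)) := lt_min one_pos (by positivity)
    have hk := key (min 1 (Agap/(2*C+1))) hθpos (min_le_left _ _)
    have h2 : min 1 (Agap/(2*C+1)) * C ≤ (Agap/(2*C+1))*C :=
      mul_le_mul_of_nonneg_right (min_le_right _ _) hCnn
    have h3 : (Agap/(2*C+1))*C < Agap := by
      rw [div_mul_eq_mul_div, div_lt_iff₀ (by positivity)]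
      nlinarith [hA0, hCnn]
    linarith
  -- the VI in real form
  have hVIreal : ∀ u, g u ≠ ⊤ →
      (g zstar).toReal ≤ ⟪(n:ℝ)⁻¹ • ∑ i, F i zstar, u - zstar⟫ + (g u).toReal := by
    intro u hu
    have h := hVI u
    rw [(EReal.coe_toReal hzsTop (hg_bot _)).symm, (EReal.coe_toReal hu (hg_bot _)).symm,
      ← EReal.coe_add] at h
    exact_mod_cast h
  -- the key pathwise one-step contraction
  have hstepkey : ∀ ω, ∀ s : ℕ, ∀ hs : s < S, ∀ t : ℕ, ∀ ht : t < n,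
      ‖z ω s (t+1) - zstar‖^2
        ≤ (1 - (7/13)*(γ*μ)) * ((1-p)*‖z ω s t - zstar‖^2 + p*‖w ω s t - zstar‖^2) := by
    intro ω s hs t ht
    have hu := hhalf ω s hs t ht
    have hz1 := hstep ω s hs t ht
    refine sovr_step_core L μ γ p hL hμ hγ0 hp0 hp2 hμL hcap
      (z ω s t) (w ω s t) zstar (α • z ω s t + (1-α) • w ω s t) (zhalf ω s t) (z ω s (t+1))
      ((n:ℝ)⁻¹ • ∑ i, F i (w ω s t))
      (F (ω.1 ⟨t, ht⟩) (zhalf ω s t) - F (ω.1 ⟨t, ht⟩) (w ω s t)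
        + (n:ℝ)⁻¹ • ∑ i, F i (w ω s t))
      ((n:ℝ)⁻¹ • ∑ i, F i zstar)
      ((n:ℝ)⁻¹ • ∑ i, F i (zhalf ω s t))
      ((g (zhalf ω s t)).toReal) ((g (z ω s (t+1))).toReal) ((g zstar).toReal)
      ?_ ?_ ?_ ?_ ?_ ?_ ?_ ?_
    · -- hM
      have hzb : α • z ω s t + (1-α) • w ω s t = (1-p) • z ω s t + p • w ω s t := by
        rw [hα, show (1:ℝ) - (1-p) = p by ring]
      rw [norm_sub_rev, hzb]
      exact sovr_mix_norm _ _ _ (1-p) p (by ring)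
    · -- hzbb
      have h1 : (α • z ω s t + (1-α) • w ω s t) - w ω s t = (1-p) • (z ω s t - w ω s t) := by
        rw [hα]
        module
      rw [h1, norm_smul, Real.norm_eq_abs, abs_of_nonneg (by linarith : (0:ℝ) ≤ 1-p)]
    · -- hub
      have h1 : (F (ω.1 ⟨t, ht⟩) (zhalf ω s t) - F (ω.1 ⟨t, ht⟩) (w ω s t)
            + (n:ℝ)⁻¹ • ∑ i, F i (w ω s t)) - (n:ℝ)⁻¹ • ∑ i, F i (zhalf ω s t)
          = (F (ω.1 ⟨t, ht⟩) (zhalf ω s t) - F (ω.1 ⟨t, ht⟩) (w ω s t))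
            - ((n:ℝ)⁻¹ • ∑ i, F i (zhalf ω s t) - (n:ℝ)⁻¹ • ∑ i, F i (w ω s t)) := by
        abel
      rw [h1]
      calc ‖_ - _‖ ≤ ‖F (ω.1 ⟨t, ht⟩) (zhalf ω s t) - F (ω.1 ⟨t, ht⟩) (w ω s t)‖
            + ‖(n:ℝ)⁻¹ • ∑ i, F i (zhalf ω s t) - (n:ℝ)⁻¹ • ∑ i, F i (w ω s t)‖ :=
          norm_sub_le _ _
      _ ≤ L*‖zhalf ω s t - w ω s t‖ + L*‖zhalf ω s t - w ω s t‖ :=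
          add_le_add (hLip _ _ _) (hFbLip _ _)
      _ = 2*L*‖zhalf ω s t - w ω s t‖ := by ring
    · -- hfb
      have h1 : (n:ℝ)⁻¹ • ∑ i, F i (w ω s t)
            - (F (ω.1 ⟨t, ht⟩) (zhalf ω s t) - F (ω.1 ⟨t, ht⟩) (w ω s t)
              + (n:ℝ)⁻¹ • ∑ i, F i (w ω s t))
          = F (ω.1 ⟨t, ht⟩) (w ω s t) - F (ω.1 ⟨t, ht⟩) (zhalf ω s t) := by
        abel
      rw [h1]
      calc ‖F (ω.1 ⟨t, ht⟩) (w ω s t) - F (ω.1 ⟨t, ht⟩) (zhalf ω s t)‖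
          ≤ L*‖w ω s t - zhalf ω s t‖ := hLip _ _ _
      _ = L*‖zhalf ω s t - w ω s t‖ := by rw [norm_sub_rev]
    · -- hmono (averaged)
      exact hFbMono (zhalf ω s t) zstar
    · -- P1
      have hgne : g (z ω s (t+1)) ≠ ⊤ := by rw [hz1]; exact hproxTop _
      have h := hproxVI ((α • z ω s t + (1-α) • w ω s t)
        - γ • ((n:ℝ)⁻¹ • ∑ i, F i (w ω s t))) (z ω s (t+1)) hgne
      rw [← hu] at h
      exact h
    · -- P2
      have h := hproxVI ((α • z ω s t + (1-α) • w ω s t)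
        - γ • (F (ω.1 ⟨t, ht⟩) (zhalf ω s t) - F (ω.1 ⟨t, ht⟩) (w ω s t)
            + (n:ℝ)⁻¹ • ∑ i, F i (w ω s t))) zstar hzsTop
      rw [← hz1] at h
      exact h
    · -- VI
      have hgu : g (zhalf ω s t) ≠ ⊤ := by rw [hu]; exact hproxTop _
      have h := hVIreal (zhalf ω s t) hgu
      have h2 := mul_le_mul_of_nonneg_left h hγ0.le
      linarith [h2]
  -- adaptedness: iterates at (s,t) depend only on earlier coins and the permutation
  have adapt : ∀ s, s < S → ∀ t, t ≤ n → ∀ ω ω' : Equiv.Perm (Fin n) × (Fin S → Fin n → Fin n),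
      ω.1 = ω'.1 →
      (∀ (s' : Fin S) (t' : Fin n), (s'.1 < s ∨ (s'.1 = s ∧ t'.1 < t)) → ω.2 s' t' = ω'.2 s' t') →
      z ω s t = z ω' s t ∧ w ω s t = w ω' s t := by
    intro s
    induction s with
    | zero =>
      intro hs0 t
      induction t with
      | zero =>
        intro _ ω ω' h1 h2
        rw [(hinit ω).1, (hinit ω).2, (hinit ω').1, (hinit ω').2]
        exact ⟨rfl, rfl⟩
      | succ t iht =>
        intro ht1 ω ω' h1 h2
        have htn : t < n := ht1
        have ih := iht htn.le ω ω' h1 (fun s' t' hc => h2 s' t'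
          (hc.imp id (fun hh => ⟨hh.1, hh.2.trans (Nat.lt_succ_self t)⟩)))
        constructor
        · rw [hstep ω 0 hs0 t htn, hstep ω' 0 hs0 t htn, hhalf ω 0 hs0 t htn,
            hhalf ω' 0 hs0 t htn, ih.1, ih.2, h1]
        · rw [hwstep ω 0 hs0 t htn, hwstep ω' 0 hs0 t htn, ih.1, ih.2,
            h2 ⟨0, hs0⟩ ⟨t, htn⟩ (Or.inr ⟨rfl, Nat.lt_succ_self t⟩)]
    | succ s ihs =>
      intro hs1 t
      have hsS : s < S := Nat.lt_of_succ_lt hs1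
      induction t with
      | zero =>
        intro _ ω ω' h1 h2
        have ih := ihs hsS n le_rfl ω ω' h1 (fun s' t' hc => h2 s' t' (by
          rcases hc with hc | hc
          · exact Or.inl (Nat.lt_succ_of_lt hc)
          · exact Or.inl (by omega)))
        have he := hepoch ω s (Nat.le_of_lt hs1)
        have he' := hepoch ω' s (Nat.le_of_lt hs1)
        rw [he.1, he.2, he'.1, he'.2]
        exact ih
      | succ t iht =>
        intro ht1 ω ω' h1 h2
        have htn : t < n := ht1
        have ih := iht htn.le ω ω' h1 (fun s' t' hc => h2 s' t'
          (hc.imp id (fun hh => ⟨hh.1, hh.2.trans (Nat.lt_succ_self t)⟩)))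
        constructor
        · rw [hstep ω (s+1) hs1 t htn, hstep ω' (s+1) hs1 t htn, hhalf ω (s+1) hs1 t htn,
            hhalf ω' (s+1) hs1 t htn, ih.1, ih.2, h1]
        · rw [hwstep ω (s+1) hs1 t htn, hwstep ω' (s+1) hs1 t htn, ih.1, ih.2,
            h2 ⟨s+1, hs1⟩ ⟨t, htn⟩ (Or.inr ⟨rfl, Nat.lt_succ_self t⟩)]
  -- coin expectation identity
  haveI : NeZero n := ⟨by omega⟩
  have coinsum : ∀ s : ℕ, ∀ hs : s < S, ∀ t : ℕ, ∀ ht : t < n,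
      (∑ ω : Equiv.Perm (Fin n) × (Fin S → Fin n → Fin n), ‖w ω s (t+1) - zstar‖^2)
        = p * (∑ ω : Equiv.Perm (Fin n) × (Fin S → Fin n → Fin n), ‖z ω s t - zstar‖^2)
          + (1-p) * (∑ ω : Equiv.Perm (Fin n) × (Fin S → Fin n → Fin n), ‖w ω s t - zstar‖^2) := by
    intro s hs t ht
    set sF : Fin S := ⟨s, hs⟩ with hsF
    set tF : Fin n := ⟨t, ht⟩ with htF
    set upd : (Equiv.Perm (Fin n) × (Fin S → Fin n → Fin n)) → Fin n →
        (Equiv.Perm (Fin n) × (Fin S → Fin n → Fin n)) :=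
      fun ω k => (ω.1, Function.update ω.2 sF (Function.update (ω.2 sF) tF k)) with hupd
    have hupdcoin : ∀ ω k, ((upd ω k).2 sF tF : Fin n) = k := by
      intro ω k
      show Function.update ω.2 sF (Function.update (ω.2 sF) tF k) sF tF = k
      rw [Function.update_self, Function.update_self]
    have hinv : ∀ ω k, z (upd ω k) s t = z ω s t ∧ w (upd ω k) s t = w ω s t := by
      intro ω k
      apply adapt s hs t ht.le (upd ω k) ω rfl
      intro s' t' hcond
      show Function.update ω.2 sF (Function.update (ω.2 sF) tF k) s' t' = ω.2 s' t'
      by_cases hs' : s' = sF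
      · subst hs'
        rw [Function.update_self]
        by_cases ht' : t' = tF
        · exfalso
          rcases hcond with hc | hc
          · rw [hsF] at hc; exact absurd hc (lt_irrefl s)
          · have h2 : t'.1 < t := hc.2
            rw [ht', htF] at h2; exact absurd h2 (lt_irrefl t)
        · rw [Function.update_of_ne ht']
      · rw [Function.update_of_ne hs']
    set e : (Equiv.Perm (Fin n) × (Fin S → Fin n → Fin n)) × Fin n →
        (Equiv.Perm (Fin n) × (Fin S → Fin n → Fin n)) × Fin n :=
      fun q => (upd q.1 q.2, (q.1).2 sF tF) with he
    have hinvol : Function.Involutive e := by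
      intro q
      obtain ⟨ω, k⟩ := q
      show (upd (upd ω k) (ω.2 sF tF), (upd ω k).2 sF tF) = (ω, k)
      refine Prod.ext (Prod.ext rfl ?_) (hupdcoin ω k)
      show Function.update (Function.update ω.2 sF (Function.update (ω.2 sF) tF k)) sF
          (Function.update ((Function.update ω.2 sF (Function.update (ω.2 sF) tF k)) sF) tF
            (ω.2 sF tF)) = ω.2
      rw [Function.update_self, Function.update_idem, Function.update_idem,
        Function.update_eq_self, Function.update_eq_self]
    -- the summand function
    set f : (Equiv.Perm (Fin n) × (Fin S → Fin n → Fin n)) → ℝ :=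
      fun ω => if ((ω.2 sF tF) : Fin n).1 = 0
        then ‖z ω s t - zstar‖^2 else ‖w ω s t - zstar‖^2 with hf
    have hfw : ∀ ω, ‖w ω s (t+1) - zstar‖^2 = f ω := by
      intro ω
      rw [hwstep ω s hs t ht]
      show _ = if ((ω.2 sF tF) : Fin n).1 = 0
        then ‖z ω s t - zstar‖^2 else ‖w ω s t - zstar‖^2
      rw [← hsF, ← htF]
      by_cases hc : ((ω.2 sF tF) : Fin n).1 = 0
      · simp [hc]
      · simp [hc]
    have h1 : ∑ q : (Equiv.Perm (Fin n) × (Fin S → Fin n → Fin n)) × Fin n, f ((e q).1)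
        = ∑ q : (Equiv.Perm (Fin n) × (Fin S → Fin n → Fin n)) × Fin n, f q.1 :=
      Equiv.sum_comp (Function.Involutive.toPerm e hinvol) (fun q => f q.1)
    have h2 : ∑ q : (Equiv.Perm (Fin n) × (Fin S → Fin n → Fin n)) × Fin n, f ((e q).1)
        = ∑ ω : Equiv.Perm (Fin n) × (Fin S → Fin n → Fin n),
            (‖z ω s t - zstar‖^2 + ((n:ℝ)-1) * ‖w ω s t - zstar‖^2) := by
      rw [Fintype.sum_prod_type]
      apply Finset.sum_congr rfl
      intro ω _
      have hterm : ∀ k : Fin n, f ((e (ω, k)).1) =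
          (if (k : Fin n).1 = 0 then ‖z ω s t - zstar‖^2 else ‖w ω s t - zstar‖^2) := by
        intro k
        show f (upd ω k) = _
        rw [hf]
        simp only [hupdcoin ω k, Function.update_self, (hinv ω k).1, (hinv ω k).2]
      rw [Finset.sum_congr rfl (fun k _ => hterm k)]
      have h3 : ∀ k : Fin n, (if (k : Fin n).1 = 0
            then ‖z ω s t - zstar‖^2 else ‖w ω s t - zstar‖^2)
          = ‖w ω s t - zstar‖^2
            + (if k = 0 then ‖z ω s t - zstar‖^2 - ‖w ω s t - zstar‖^2 else 0) := by
        intro k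
        by_cases h : k = (0 : Fin n)
        · subst h; simp
        · have hne : ¬ (k.1 = 0) := fun hc => h (Fin.ext (by simpa using hc))
          simp [h, hne]
      rw [Finset.sum_congr rfl (fun k _ => h3 k), Finset.sum_add_distrib, Finset.sum_const,
        Finset.sum_ite_eq' Finset.univ (0 : Fin n)
          (fun _ => ‖z ω s t - zstar‖^2 - ‖w ω s t - zstar‖^2)]
      simp [Finset.card_univ]
      ring
    have h4 : ∑ q : (Equiv.Perm (Fin n) × (Fin S → Fin n → Fin n)) × Fin n, f q.1
        = (n:ℝ) * ∑ ω : Equiv.Perm (Fin n) × (Fin S → Fin n → Fin n), f ω := by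
      rw [Fintype.sum_prod_type]
      rw [Finset.sum_congr rfl (fun ω _ => Finset.sum_const (f ω))]
      rw [Finset.sum_congr rfl (fun ω (_ : ω ∈ Finset.univ) => by
        rw [Finset.card_univ, Fintype.card_fin, nsmul_eq_mul])]
      rw [← Finset.mul_sum]
    have hcount : (n:ℝ) * (∑ ω : Equiv.Perm (Fin n) × (Fin S → Fin n → Fin n), f ω)
        = (∑ ω : Equiv.Perm (Fin n) × (Fin S → Fin n → Fin n), ‖z ω s t - zstar‖^2)
          + ((n:ℝ)-1) * (∑ ω : Equiv.Perm (Fin n) × (Fin S → Fin n → Fin n), ‖w ω s t - zstar‖^2) := by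
      rw [← h4, ← h1, h2, Finset.sum_add_distrib, ← Finset.mul_sum]
    have hn0 : (n:ℝ) ≠ 0 := by positivity
    have hfinal : (∑ ω : Equiv.Perm (Fin n) × (Fin S → Fin n → Fin n), ‖w ω s (t+1) - zstar‖^2)
        = ∑ ω : Equiv.Perm (Fin n) × (Fin S → Fin n → Fin n), f ω :=
      Finset.sum_congr rfl (fun ω _ => hfw ω)
    rw [hfinal, hp]
    field_simp
    linarith [hcount]

  -- sums X, Y
  set X : ℕ → ℕ → ℝ := fun a b =>
    ∑ ω : Equiv.Perm (Fin n) × (Fin S → Fin n → Fin n), ‖z ω a b - zstar‖^2 with hXdef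
  set Y : ℕ → ℕ → ℝ := fun a b =>
    ∑ ω : Equiv.Perm (Fin n) × (Fin S → Fin n → Fin n), ‖w ω a b - zstar‖^2 with hYdef
  have hXnn : ∀ a b, 0 ≤ X a b := fun a b => Finset.sum_nonneg (fun ω _ => by positivity)
  have hYnn : ∀ a b, 0 ≤ Y a b := fun a b => Finset.sum_nonneg (fun ω _ => by positivity)
  have hXY00 : X 0 0 = Y 0 0 :=
    Finset.sum_congr rfl (fun ω _ => by rw [(hinit ω).1, (hinit ω).2])
  have hVnn : 0 ≤ X 0 0 + Y 0 0 := by linarith [hXnn 0 0, hYnn 0 0]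
  -- the bb parameter
  have hbden : (0:ℝ) < 2*p - γ*μ/4 := by linarith [hκ', hgm0, hp0]
  have hbbid : (p/(2*p - γ*μ/4))*(2*p - γ*μ/4) = p := div_mul_cancel₀ p hbden.ne'
  have hbb5 : 1/2 ≤ p/(2*p - γ*μ/4) := by
    rw [le_div_iff₀ hbden]; linarith [hgm0]
  have hbb24 : p/(2*p - γ*μ/4) ≤ 24/47 := by
    rw [div_le_iff₀ hbden]; linarith [hκ']
  have hR0 : (0:ℝ) ≤ 1 - γ*μ/4 := by linarith [hκ', hp2, hgm0]
  -- polytope step lemmas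
  have poly1 : ∀ v x y : ℝ, 0 ≤ v → 0 ≤ x → 0 ≤ y → x + y ≤ v → y ≤ (p/(2*p - γ*μ/4))*v →
      ((1-(7/13)*(γ*μ))*(1-p))*x + ((1-(7/13)*(γ*μ))*p)*y + (p*x + (1-p)*y)
        ≤ (1 - γ*μ/4)*v := by
    intro v x y hv hx hy hxy hybb
    have hq0 : (0:ℝ) ≤ (7/13)*(γ*μ) := by positivity
    have hc1 : (0:ℝ) ≤ 1 - (7/13)*(γ*μ)*(1-p) := by
      have h1 : (7/13)*(γ*μ)*(1-p) ≤ (7/13)*(γ*μ)*1 :=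
        mul_le_mul_of_nonneg_left (by linarith) hq0
      nlinarith [hκ', hp2, hgm0]
    have t1 : (1 - (7/13)*(γ*μ)*(1-p))*(x+y) ≤ (1 - (7/13)*(γ*μ)*(1-p))*v :=
      mul_le_mul_of_nonneg_left hxy hc1
    have hc2 : (0:ℝ) ≤ (7/13)*(γ*μ)*(1-2*p) := mul_nonneg hq0 (by linarith)
    have t2 : ((7/13)*(γ*μ)*(1-2*p))*y ≤ ((7/13)*(γ*μ)*(1-2*p))*((p/(2*p - γ*μ/4))*v) :=
      mul_le_mul_of_nonneg_left hybb hc2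
    have h24 : (7/13)*(γ*μ)*((1-2*p)*(p/(2*p - γ*μ/4)))
        ≤ (7/13)*(γ*μ)*((1-2*p)*(24/47)) := by
      apply mul_le_mul_of_nonneg_left _ hq0
      exact mul_le_mul_of_nonneg_left hbb24 (by linarith)
    have hqp : (0:ℝ) ≤ (7/13)*(γ*μ)*p := by positivity
    have hcoef : (1 - (7/13)*(γ*μ)*(1-p)) + ((7/13)*(γ*μ)*(1-2*p))*(p/(2*p - γ*μ/4))
        ≤ 1 - γ*μ/4 := by
      nlinarith [h24, hqp, hgm0]
    have hcv := mul_le_mul_of_nonneg_right hcoef hv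
    have hid : ((1-(7/13)*(γ*μ))*(1-p))*x + ((1-(7/13)*(γ*μ))*p)*y + (p*x + (1-p)*y)
        = (1 - (7/13)*(γ*μ)*(1-p))*(x+y) + ((7/13)*(γ*μ)*(1-2*p))*y := by ring
    nlinarith [t1, t2, hcv, hid]
  have poly2 : ∀ v x y : ℝ, 0 ≤ v → 0 ≤ x → 0 ≤ y → x + y ≤ v → y ≤ (p/(2*p - γ*μ/4))*v →
      p*x + (1-p)*y ≤ (p/(2*p - γ*μ/4))*((1 - γ*μ/4)*v) := by
    intro v x y hv hx hy hxy hybb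
    have t1 : p*x ≤ p*(v - y) := mul_le_mul_of_nonneg_left (by linarith) hp0.le
    have t2 : (1-2*p)*y ≤ (1-2*p)*((p/(2*p - γ*μ/4))*v) :=
      mul_le_mul_of_nonneg_left hybb (by linarith)
    have hident : p + (1-2*p)*(p/(2*p - γ*μ/4)) = (p/(2*p - γ*μ/4))*(1 - γ*μ/4) := by
      nlinarith [hbbid]
    calc p*x + (1-p)*y ≤ p*v + (1-2*p)*y := by linarith [t1]
    _ ≤ p*v + (1-2*p)*((p/(2*p - γ*μ/4))*v) := by linarith [t2]
    _ = (p + (1-2*p)*(p/(2*p - γ*μ/4)))*v := by ring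
    _ = ((p/(2*p - γ*μ/4))*(1 - γ*μ/4))*v := by rw [hident]
    _ = (p/(2*p - γ*μ/4))*((1 - γ*μ/4)*v) := by ring
  -- one-step recursion for the sums
  have hXrec : ∀ s : ℕ, ∀ hs : s < S, ∀ t : ℕ, ∀ ht : t < n,
      X s (t+1) ≤ ((1-(7/13)*(γ*μ))*(1-p))*(X s t) + ((1-(7/13)*(γ*μ))*p)*(Y s t) := by
    intro s hs t ht
    calc X s (t+1) ≤ ∑ ω : Equiv.Perm (Fin n) × (Fin S → Fin n → Fin n),
        ((1-(7/13)*(γ*μ))*((1-p)*‖z ω s t - zstar‖^2 + p*‖w ω s t - zstar‖^2)) :=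
        Finset.sum_le_sum (fun ω _ => hstepkey ω s hs t ht)
    _ = ∑ ω : Equiv.Perm (Fin n) × (Fin S → Fin n → Fin n),
        (((1-(7/13)*(γ*μ))*(1-p))*‖z ω s t - zstar‖^2
          + ((1-(7/13)*(γ*μ))*p)*‖w ω s t - zstar‖^2) :=
        Finset.sum_congr rfl (fun ω _ => by ring)
    _ = ((1-(7/13)*(γ*μ))*(1-p))*(X s t) + ((1-(7/13)*(γ*μ))*p)*(Y s t) := by
        rw [Finset.sum_add_distrib, ← Finset.mul_sum, ← Finset.mul_sum]
  -- combined one-step on the invariant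
  have hmainstep : ∀ s : ℕ, ∀ hs : s < S, ∀ t : ℕ, ∀ ht : t < n, ∀ k : ℕ,
      X s t + Y s t ≤ (1 - γ*μ/4)^k*(X 0 0 + Y 0 0) →
      Y s t ≤ (p/(2*p - γ*μ/4))*((1 - γ*μ/4)^k*(X 0 0 + Y 0 0)) →
      X s (t+1) + Y s (t+1) ≤ (1 - γ*μ/4)^(k+1)*(X 0 0 + Y 0 0)
        ∧ Y s (t+1) ≤ (p/(2*p - γ*μ/4))*((1 - γ*μ/4)^(k+1)*(X 0 0 + Y 0 0)) := by
    intro s hs t ht k hXY hYb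
    have h1 := hXrec s hs t ht
    have h2 : Y s (t+1) = p * X s t + (1-p) * Y s t := coinsum s hs t ht
    have hvnn : 0 ≤ (1 - γ*μ/4)^k*(X 0 0 + Y 0 0) := mul_nonneg (pow_nonneg hR0 _) hVnn
    have hpoly1 := poly1 ((1 - γ*μ/4)^k*(X 0 0 + Y 0 0)) (X s t) (Y s t) hvnn
      (hXnn _ _) (hYnn _ _) hXY hYb
    have hpoly2 := poly2 ((1 - γ*μ/4)^k*(X 0 0 + Y 0 0)) (X s t) (Y s t) hvnn
      (hXnn _ _) (hYnn _ _) hXY hYb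
    constructor
    · have h3 : X s (t+1) + Y s (t+1) ≤ (1 - γ*μ/4)*((1 - γ*μ/4)^k*(X 0 0 + Y 0 0)) := by
        rw [h2]; linarith
      calc X s (t+1) + Y s (t+1) ≤ (1 - γ*μ/4)*((1 - γ*μ/4)^k*(X 0 0 + Y 0 0)) := h3
      _ = (1 - γ*μ/4)^(k+1)*(X 0 0 + Y 0 0) := by rw [pow_succ]; ring
    · rw [h2]
      calc p*(X s t) + (1-p)*(Y s t)
          ≤ (p/(2*p - γ*μ/4))*((1 - γ*μ/4)*((1 - γ*μ/4)^k*(X 0 0 + Y 0 0))) := hpoly2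
      _ = (p/(2*p - γ*μ/4))*((1 - γ*μ/4)^(k+1)*(X 0 0 + Y 0 0)) := by rw [pow_succ]; ring
  -- the main induction over (s,t)
  have main : ∀ s, s < S → ∀ t, t ≤ n →
      X s t + Y s t ≤ (1 - γ*μ/4)^(s*n+t)*(X 0 0 + Y 0 0)
        ∧ Y s t ≤ (p/(2*p - γ*μ/4))*((1 - γ*μ/4)^(s*n+t)*(X 0 0 + Y 0 0)) := by
    intro s
    induction s with
    | zero =>
      intro hs0 t
      induction t with
      | zero =>
        intro _
        rw [show 0*n+0 = 0 by simp, pow_zero, one_mul]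
        constructor
        · exact le_refl _
        · nlinarith [hbb5, hYnn 0 0, hXY00]
      | succ t iht =>
        intro ht1
        have htn : t < n := ht1
        obtain ⟨ih1, ih2⟩ := iht (Nat.le_of_lt htn)
        exact hmainstep 0 hs0 t htn (0*n+t) ih1 ih2
    | succ s ihs =>
      intro hs1 t
      have hsS : s < S := Nat.lt_of_succ_lt hs1
      induction t with
      | zero =>
        intro _
        obtain ⟨ih1, ih2⟩ := ihs hsS n le_rfl
        have hz0 : X (s+1) 0 = X s n :=
          Finset.sum_congr rfl (fun ω _ => by rw [(hepoch ω s (Nat.le_of_lt hs1)).1])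
        have hw0 : Y (s+1) 0 = Y s n :=
          Finset.sum_congr rfl (fun ω _ => by rw [(hepoch ω s (Nat.le_of_lt hs1)).2])
        have hexp : (s+1)*n + 0 = s*n + n := by ring
        rw [hz0, hw0, hexp]
        exact ⟨ih1, ih2⟩
      | succ t iht =>
        intro ht1
        have htn : t < n := ht1
        obtain ⟨ih1, ih2⟩ := iht (Nat.le_of_lt htn)
        exact hmainstep (s+1) hs1 t htn ((s+1)*n+t) ih1 ih2
  -- conclude
  obtain ⟨hfin, -⟩ := main (S-1) (by omega) n le_rfl
  have hexp2 : (S-1)*n + n = S*n := by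
    obtain ⟨S', rfl⟩ : ∃ S', S = S'+1 := ⟨S-1, by omega⟩
    simp [Nat.succ_sub_one, Nat.succ_mul]
  rw [hexp2] at hfin
  have hcard : (0:ℝ) < (Fintype.card (Equiv.Perm (Fin n) × (Fin S → Fin n → Fin n)) : ℝ) := by
    have := Fintype.card_pos (α := Equiv.Perm (Fin n) × (Fin S → Fin n → Fin n))
    exact_mod_cast this
  have hsplit : ∀ a b : ℕ, (∑ ω : Equiv.Perm (Fin n) × (Fin S → Fin n → Fin n),
      (‖z ω a b - zstar‖^2 + ‖w ω a b - zstar‖^2)) = X a b + Y a b :=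
    fun a b => Finset.sum_add_distrib
  rw [hsplit, hsplit]
  calc (X (S-1) n + Y (S-1) n) /
        (Fintype.card (Equiv.Perm (Fin n) × (Fin S → Fin n → Fin n)) : ℝ)
      ≤ ((1 - γ*μ/4)^(S*n)*(X 0 0 + Y 0 0)) /
        (Fintype.card (Equiv.Perm (Fin n) × (Fin S → Fin n → Fin n)) : ℝ) := by
        gcongr
  _ = (1 - γ*μ/4)^(S*n) * ((X 0 0 + Y 0 0) /
        (Fintype.card (Equiv.Perm (Fin n) × (Fin S → Fin n → Fin n)) : ℝ)) := by ring
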